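/- Let (U; b, h, V) be an ε-hermitian variation structure. Suppose U = U₁ ⊕ U₂ and that b and h decompose as block direct sums b = b₁ ⊕ b₂ and h = h₁ ⊕ h₂ with respect to this decomposition, with b₁ nondegenerate. Then V also decomposes as V = V₁ ⊕ V₂, i.e. the variation structure splits as a direct sum of two variation structures. -/

import Mathlib

open Matrix

/-- Splitting Lemma: if `b` and `h` of an ε-hermitian variation structure
are block diagonal with respect to `U = U₁ ⊕ U₂` and `b₁` is nondegenerate, then `V`
is block diagonal too, i.e. the variation structure splits. -/
theorem HVS_splitting {m n : ℕ} (ε : ℂ) (hε : ε = 1 ∨ ε = -1)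
    (b h V : Matrix (Fin m ⊕ Fin n) (Fin m ⊕ Fin n) ℂ)
    (hherm : bᴴ = ε • b)
    (hauto : IsUnit h.det)
    (hpres : hᴴ * b * h = b)
    (hPL1 : V * b = h - 1)
    (hPL2 : Vᴴ = -ε • (V * hᴴ))
    (hb12 : b.toBlocks₁₂ = 0) (hb21 : b.toBlocks₂₁ = 0)
    (hh12 : h.toBlocks₁₂ = 0) (hh21 : h.toBlocks₂₁ = 0)
    (hb1 : IsUnit (b.toBlocks₁₁).det) :
    V.toBlocks₁₂ = 0 ∧ V.toBlocks₂₁ = 0 := by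
  have hb' : b = fromBlocks b.toBlocks₁₁ 0 0 b.toBlocks₂₂ := by
    rw [← hb12, ← hb21, fromBlocks_toBlocks]
  have hh' : h = fromBlocks h.toBlocks₁₁ 0 0 h.toBlocks₂₂ := by
    rw [← hh12, ← hh21, fromBlocks_toBlocks]
  have hV' : V = fromBlocks V.toBlocks₁₁ V.toBlocks₁₂ V.toBlocks₂₁ V.toBlocks₂₂ :=
    (fromBlocks_toBlocks V).symm
  -- (2,1) block of hPL1 : V₂₁ * b₁ = 0
  have h21 : V.toBlocks₂₁ * b.toBlocks₁₁ = 0 := by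
    have := congrArg Matrix.toBlocks₂₁ hPL1
    rw [hV', hb', hh', ← fromBlocks_one] at this
    rw [fromBlocks_multiply, sub_eq_add_neg, fromBlocks_neg, fromBlocks_add,
      Matrix.toBlocks_fromBlocks₂₁, Matrix.toBlocks_fromBlocks₂₁] at this
    simpa using this
  have hV21 : V.toBlocks₂₁ = 0 := by
    have hinv := Matrix.mul_nonsing_inv b.toBlocks₁₁ hb1
    have h2 : V.toBlocks₂₁ * b.toBlocks₁₁ * (b.toBlocks₁₁)⁻¹ = 0 := by
      rw [h21, Matrix.zero_mul]
    rwa [Matrix.mul_assoc, hinv, Matrix.mul_one] at h2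
  -- Vᴴ.toBlocks₂₁ = (V.toBlocks₁₂)ᴴ, and (V * hᴴ) block (2,1) = V₂₁ * h₁₁ᴴ = 0? no.
  -- (hᴴ) = fromBlocks h₁ᴴ 0 0 h₂ᴴ. (V*hᴴ)₂₁ = V₂₁ * h₁ᴴ = 0.
  -- Then Vᴴ₂₁ = (V₁₂)ᴴ = -ε • 0 = 0, giving V₁₂ = 0. Good, no need h₂ invertible.
  have h12 : (V.toBlocks₁₂)ᴴ = 0 := by
    have := congrArg Matrix.toBlocks₂₁ hPL2
    rw [hV', hh', fromBlocks_conjTranspose, fromBlocks_conjTranspose, fromBlocks_multiply,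
      fromBlocks_smul, Matrix.toBlocks_fromBlocks₂₁, Matrix.toBlocks_fromBlocks₂₁] at this
    simpa [hV21] using this
  refine ⟨?_, hV21⟩
  have := congrArg Matrix.conjTranspose h12
  simpa using this
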